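/- There exists a constant C such that for every integer n ≥ 3 the following holds: let α = (1 2 3) and β = (2 3 4 … n) be permutations of {1,…,n} (so α and β are the generators of the 2-connected (3, n−1)-puzzle). Then every even permutation of {1,…,n} can be written as a product of at most C·n² elements of {α, α⁻¹, β, β⁻¹}. In particular, the subgroup generated by {α, β} contains the alternating group A_n. -/

import Mathlib

namespace Puzzle
open Equiv Equiv.Perm

variable {A : Type*} [DecidableEq A]

def cyc (x y z : A) : Equiv.Perm A := Equiv.swap x y * Equiv.swap y z

lemma cyc_apply_left {x y z : A} (hxy : x ≠ y) (hxz : x ≠ z) : cyc x y z x = y := by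
  simp [cyc, Equiv.swap_apply_of_ne_of_ne hxy hxz]

lemma cyc_apply_mid {x y z : A} (hxz : x ≠ z) (hyz : y ≠ z) : cyc x y z y = z := by
  simp [cyc, Equiv.swap_apply_of_ne_of_ne hxz.symm hyz.symm]

lemma cyc_apply_right (x y z : A) : cyc x y z z = x := by
  simp [cyc]

lemma cyc_apply_of_ne {x y z t : A} (h1 : t ≠ x) (h2 : t ≠ y) (h3 : t ≠ z) :
    cyc x y z t = t := by
  simp [cyc, Equiv.swap_apply_of_ne_of_ne h2 h3, Equiv.swap_apply_of_ne_of_ne h1 h2]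

lemma cyc_rot {x y z : A} (hxy : x ≠ y) (hxz : x ≠ z) (hyz : y ≠ z) :
    cyc x y z = cyc y z x := by
  ext t
  by_cases h1 : t = x
  · subst h1; rw [cyc_apply_left hxy hxz, cyc_apply_right]
  · by_cases h2 : t = y
    · subst h2; rw [cyc_apply_mid hxz hyz, cyc_apply_left hyz (Ne.symm hxy)]
    · by_cases h3 : t = z
      · subst h3; rw [cyc_apply_right, cyc_apply_mid (Ne.symm hxy) (Ne.symm hxz)]
      · rw [cyc_apply_of_ne h1 h2 h3, cyc_apply_of_ne h2 h3 h1]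

lemma cyc_conj (f : Equiv.Perm A) (x y z : A) :
    f * cyc x y z * f⁻¹ = cyc (f x) (f y) (f z) := by
  simp only [cyc, Equiv.swap_apply_apply]
  group

lemma cyc_chain {a x y z : A} (hax : a ≠ x) (hay : a ≠ y) (haz : a ≠ z)
    (hxy : x ≠ y) (hxz : x ≠ z) (hyz : y ≠ z) :
    cyc a x y * cyc a y z = cyc x y z := by
  ext t
  rw [Equiv.Perm.mul_apply]
  by_cases h0 : t = a
  · subst h0
    rw [cyc_apply_left hay haz, cyc_apply_right,
      cyc_apply_of_ne hax hay haz]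
  · by_cases h1 : t = x
    · subst h1
      rw [cyc_apply_of_ne hax.symm hxy hxz, cyc_apply_mid hay hxy,
        cyc_apply_left hxy hxz]
    · by_cases h2 : t = y
      · subst h2
        rw [cyc_apply_mid haz hyz, cyc_apply_of_ne haz.symm hxz.symm hyz.symm,
          cyc_apply_mid hxz hyz]
      · by_cases h3 : t = z
        · subst h3
          rw [cyc_apply_right, cyc_apply_left hax hay, cyc_apply_right]
        · rw [cyc_apply_of_ne h0 h2 h3, cyc_apply_of_ne h0 h1 h2,
            cyc_apply_of_ne h1 h2 h3]

end Puzzle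

namespace Puzzle
open Equiv Equiv.Perm

def aa (n : ℕ) (hn : 3 ≤ n) : Equiv.Perm (Fin n) :=
  List.formPerm [(⟨0, Nat.lt_of_lt_of_le (by decide) hn⟩ : Fin n), ⟨1, Nat.lt_of_lt_of_le (by decide) hn⟩, ⟨2, Nat.lt_of_lt_of_le (by decide) hn⟩]

def bb (n : ℕ) : Equiv.Perm (Fin n) :=
  List.formPerm ((List.finRange n).drop 1)

variable {n : ℕ}

def z0 (hn : 3 ≤ n) : Fin n := ⟨0, Nat.lt_of_lt_of_le (by decide) hn⟩

def w (hn : 3 ≤ n) (i : ℕ) : Fin n := ⟨i % (n - 1) + 1, by have := Nat.mod_lt i (show 0 < n - 1 by omega); omega⟩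

variable (hn : 3 ≤ n)

lemma w_ne_z0 (i : ℕ) : w hn i ≠ z0 hn := by
  simp only [w, z0, ne_eq, Fin.mk.injEq]
  omega

lemma w_eq_iff {i j : ℕ} : w hn i = w hn j ↔ i % (n - 1) = j % (n - 1) := by
  simp only [w, Fin.mk.injEq]
  omega

lemma wheel_length : ((List.finRange n).drop 1).length = n - 1 := by
  simp

lemma wheel_nodup : ((List.finRange n).drop 1).Nodup :=
  (List.drop_sublist 1 _).nodup (List.nodup_finRange n)

lemma wheel_getElem (i : ℕ) (h : i < n - 1) :
    ((List.finRange n).drop 1)[i]'(by simpa using h) = (⟨i + 1, by omega⟩ : Fin n) := by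
  rw [List.getElem_drop]
  simp only [List.getElem_finRange]
  ext
  simp [Nat.add_comm]

lemma z0_not_mem_wheel : z0 hn ∉ (List.finRange n).drop 1 := by
  intro hmem
  obtain ⟨i, hi, he⟩ := List.getElem_of_mem hmem
  rw [wheel_getElem hn i (by simpa using hi)] at he
  simp only [z0, Fin.mk.injEq] at he
  omega

lemma bb_apply_z0 : bb n (z0 hn) = z0 hn :=
  List.formPerm_apply_of_notMem (z0_not_mem_wheel hn)

lemma bb_apply_w (i : ℕ) : bb n (w hn i) = w hn (i + 1) := by
  have hm1 : 0 < n - 1 := by omega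
  have h1 : i % (n - 1) < n - 1 := Nat.mod_lt _ hm1
  have h2 : (i + 1) % (n - 1) < n - 1 := Nat.mod_lt _ hm1
  have hw : w hn i = ((List.finRange n).drop 1)[i % (n - 1)]'(by simpa using h1) := by
    rw [wheel_getElem hn _ h1]; rfl
  rw [bb, hw, List.formPerm_apply_getElem _ wheel_nodup]
  have h3 : (i % (n - 1) + 1) % ((List.finRange n).drop 1).length = (i + 1) % (n - 1) := by
    simp only [List.length_drop, List.length_finRange]
    conv_rhs => rw [Nat.add_mod, Nat.mod_eq_of_lt (show 1 < n - 1 by omega)]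
  simp only [h3]
  rw [wheel_getElem hn _ h2]
  rfl

end Puzzle

namespace Puzzle
open Equiv Equiv.Perm

variable {n : ℕ} (hn : 3 ≤ n)

lemma bb_pow_w (k i : ℕ) : ((bb n) ^ k) (w hn i) = w hn (i + k) := by
  induction k with
  | zero => simp
  | succ m ih =>
      rw [pow_succ', Equiv.Perm.mul_apply, ih]
      exact bb_apply_w hn (i + m)

lemma bb_pow_z0 (k : ℕ) : ((bb n) ^ k) (z0 hn) = z0 hn := by
  induction k with
  | zero => simp
  | succ m ih => rw [pow_succ', Equiv.Perm.mul_apply, ih, bb_apply_z0 hn]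

lemma w_zero : w hn 0 = (⟨1, Nat.lt_of_lt_of_le (by decide) hn⟩ : Fin n) := by
  simp only [w, Fin.mk.injEq, Nat.zero_mod]

lemma w_one : w hn 1 = (⟨2, Nat.lt_of_lt_of_le (by decide) hn⟩ : Fin n) := by
  simp only [w, Fin.mk.injEq]
  have : 1 % (n - 1) = 1 := Nat.mod_eq_of_lt (by omega)
  omega

lemma aa_eq : aa n hn = cyc (z0 hn) (w hn 0) (w hn 1) := by
  rw [aa, cyc, w_zero, w_one]
  simp [List.formPerm, z0]

/-- permutations writable as words of length ≤ k in the generators -/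
def IsWord (k : ℕ) (π : Equiv.Perm (Fin n)) : Prop :=
  ∃ l : List (Equiv.Perm (Fin n)), l.length ≤ k ∧
    (∀ g ∈ l, g = aa n hn ∨ g = (aa n hn)⁻¹ ∨ g = bb n ∨ g = (bb n)⁻¹) ∧
    l.prod = π

lemma IsWord.mono {k m : ℕ} {π : Equiv.Perm (Fin n)} (h : IsWord hn k π) (hkm : k ≤ m) :
    IsWord hn m π := by
  obtain ⟨l, h1, h2, h3⟩ := h
  exact ⟨l, h1.trans hkm, h2, h3⟩

lemma IsWord.one : IsWord hn 0 (1 : Equiv.Perm (Fin n)) := ⟨[], by simp, by simp, rfl⟩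

lemma IsWord.a : IsWord hn 1 (aa n hn) := ⟨[aa n hn], by simp, by simp, by simp⟩

lemma IsWord.mul {k m : ℕ} {π σ : Equiv.Perm (Fin n)}
    (h1 : IsWord hn k π) (h2 : IsWord hn m σ) : IsWord hn (k + m) (π * σ) := by
  obtain ⟨l1, ha1, hb1, hc1⟩ := h1
  obtain ⟨l2, ha2, hb2, hc2⟩ := h2
  exact ⟨l1 ++ l2, by simp; omega, by
    intro g hg
    rcases List.mem_append.1 hg with h | h
    exacts [hb1 g h, hb2 g h], by rw [List.prod_append, hc1, hc2]⟩

lemma IsWord.inv {k : ℕ} {π : Equiv.Perm (Fin n)} (h : IsWord hn k π) :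
    IsWord hn k π⁻¹ := by
  obtain ⟨l, h1, h2, h3⟩ := h
  refine ⟨(l.map Inv.inv).reverse, by simp [h1], ?_, ?_⟩
  · intro g hg
    simp only [List.mem_reverse, List.mem_map] at hg
    obtain ⟨g', hg', rfl⟩ := hg
    rcases h2 g' hg' with h | h | h | h <;> subst h <;> simp
  · rw [← h3, ← List.prod_inv_reverse]

lemma IsWord.bpow (k : ℕ) : IsWord hn k ((bb n) ^ k) :=
  ⟨List.replicate k (bb n), by simp, by
    intro g hg
    rw [List.eq_of_mem_replicate hg]; tauto, by simp⟩

lemma IsWord.conj {k m : ℕ} {π σ : Equiv.Perm (Fin n)}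
    (h1 : IsWord hn k π) (h2 : IsWord hn m σ) :
    IsWord hn (k + m + k) (π * σ * π⁻¹) :=
  (h1.mul hn h2).mul hn h1.inv

/-- the conjugates of α by powers of β -/
lemma IsWord.delta (i : ℕ) :
    IsWord hn (2 * i + 1) (cyc (z0 hn) (w hn i) (w hn (i + 1))) := by
  have h : (bb n) ^ i * aa n hn * ((bb n) ^ i)⁻¹
      = cyc (z0 hn) (w hn i) (w hn (i + 1)) := by
    rw [aa_eq hn, cyc_conj, bb_pow_z0 hn, bb_pow_w hn, bb_pow_w hn]
    rw [Nat.zero_add, Nat.add_comm 1 i]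
  rw [← h]
  have := ((IsWord.bpow hn i).mul hn (IsWord.a hn)).mul hn (IsWord.bpow hn i).inv
  exact this.mono hn (by omega)

end Puzzle

namespace Puzzle
open Equiv Equiv.Perm

lemma mod_add_cancel {m x y : ℕ} (k : ℕ) (h : x % m = y % m) :
    (x + k) % m = (y + k) % m := by
  rw [Nat.add_mod x, Nat.add_mod y, h]

lemma mod_succ_cancel {m x y : ℕ} (hm : 1 ≤ m) (h : (x + 1) % m = (y + 1) % m) :
    x % m = y % m := by
  have := mod_add_cancel (m - 1) h
  have hx : x + 1 + (m - 1) = x + m := by omega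
  have hy : y + 1 + (m - 1) = y + m := by omega
  rwa [hx, hy, Nat.add_mod_right, Nat.add_mod_right] at this

variable {n : ℕ} (hn : 3 ≤ n)

lemma w_ne {i j : ℕ} (hi : i < n - 1) (hj : j < n - 1) (hij : i ≠ j) :
    w hn i ≠ w hn j := fun h => hij (by
  rw [w_eq_iff] at h
  rwa [Nat.mod_eq_of_lt hi, Nat.mod_eq_of_lt hj] at h)

lemma cycB (c i : ℕ) (hc : c < n - 1) (hi : i < n - 1)
    (hc1 : c % (n - 1) ≠ i % (n - 1)) (hc2 : c % (n - 1) ≠ (i + 1) % (n - 1)) :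
    IsWord hn (8 * n) (cyc (w hn c) (w hn i) (w hn (i + 1))) := by
  have hm : 1 ≤ n - 1 := by omega
  by_cases hcons : (c + 1) % (n - 1) = i % (n - 1)
  · -- consecutive triple
    have hi1 : (i + 1) % (n - 1) = (c + 2) % (n - 1) := (mod_add_cancel 1 hcons).symm
    have hm3 : 3 ≤ n - 1 := by
      by_contra hlt
      have hm2 : n - 1 = 2 := by omega
      rw [hm2] at hc2 hi1
      omega
    have chain : aa n hn * cyc (z0 hn) (w hn 1) (w hn 2)
        = cyc (w hn 0) (w hn 1) (w hn 2) := by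
      rw [aa_eq hn]
      exact cyc_chain (Ne.symm (w_ne_z0 hn 0)) (Ne.symm (w_ne_z0 hn 1))
        (Ne.symm (w_ne_z0 hn 2)) (w_ne hn (by omega) (by omega) (by omega))
        (w_ne hn (by omega) (by omega) (by omega))
        (w_ne hn (by omega) (by omega) (by omega))
    have key : (bb n ^ c) * (aa n hn * cyc (z0 hn) (w hn 1) (w hn 2)) * (bb n ^ c)⁻¹
        = cyc (w hn c) (w hn (c + 1)) (w hn (c + 2)) := by
      rw [chain, cyc_conj, bb_pow_w hn, bb_pow_w hn, bb_pow_w hn,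
        show (0 : ℕ) + c = c from by omega, show 1 + c = c + 1 from by omega,
        show 2 + c = c + 2 from by omega]
    rw [show w hn i = w hn (c + 1) from (w_eq_iff hn).2 hcons.symm,
      show w hn (i + 1) = w hn (c + 2) from (w_eq_iff hn).2 hi1, ← key]
    exact (((IsWord.bpow hn c).mul hn ((IsWord.a hn).mul hn (IsWord.delta hn 1))).mul hn
      (IsWord.bpow hn c).inv).mono hn (by omega)
  · -- generic: conjugate delta i by delta c
    have e1 : cyc (z0 hn) (w hn c) (w hn (c + 1)) (z0 hn) = w hn c :=
      cyc_apply_left (Ne.symm (w_ne_z0 hn c)) (Ne.symm (w_ne_z0 hn (c + 1)))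
    have e2 : cyc (z0 hn) (w hn c) (w hn (c + 1)) (w hn i) = w hn i :=
      cyc_apply_of_ne (w_ne_z0 hn i) (fun h => hc1 ((w_eq_iff hn).1 h).symm)
        (fun h => hcons ((w_eq_iff hn).1 h).symm)
    have e3 : cyc (z0 hn) (w hn c) (w hn (c + 1)) (w hn (i + 1)) = w hn (i + 1) :=
      cyc_apply_of_ne (w_ne_z0 hn (i + 1)) (fun h => hc2 ((w_eq_iff hn).1 h).symm)
        (fun h => hc1 (mod_succ_cancel hm ((w_eq_iff hn).1 h).symm))
    have key : cyc (z0 hn) (w hn c) (w hn (c + 1)) * cyc (z0 hn) (w hn i) (w hn (i + 1)) *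
        (cyc (z0 hn) (w hn c) (w hn (c + 1)))⁻¹
        = cyc (w hn c) (w hn i) (w hn (i + 1)) := by
      rw [cyc_conj, e1, e2, e3]
    rw [← key]
    exact ((IsWord.delta hn c).conj hn (IsWord.delta hn i)).mono hn (by omega)

end Puzzle

namespace Puzzle
open Equiv Equiv.Perm

lemma mod_mod_add {m x : ℕ} (k : ℕ) : (x % m + k) % m = (x + k) % m :=
  mod_add_cancel k (Nat.mod_mod_of_dvd x dvd_rfl)

lemma mod_succ_ne {m x : ℕ} (hm : 2 ≤ m) : (x + 1) % m ≠ x % m := by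
  intro h
  have h1 : (x + 1) % m = (x % m + 1) % m := (mod_mod_add 1).symm
  have hx : x % m < m := Nat.mod_lt _ (by omega)
  rcases Nat.lt_or_ge (x % m + 1) m with hl | hl
  · rw [h1, Nat.mod_eq_of_lt hl] at h
    omega
  · have hx1 : x % m + 1 = m := by omega
    rw [h1, hx1, Nat.mod_self] at h
    omega

variable {n : ℕ} (hn : 3 ≤ n)

lemma cyc0 (i j : ℕ) (hi : i < n - 1) (hj : j < n - 1) (hij : i ≠ j) :
    IsWord hn (14 * n) (cyc (z0 hn) (w hn i) (w hn j)) := by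
  have hm : 2 ≤ n - 1 := by omega
  have him : i % (n - 1) = i := Nat.mod_eq_of_lt hi
  have hjm : j % (n - 1) = j := Nat.mod_eq_of_lt hj
  by_cases hadj : (i + 1) % (n - 1) = j % (n - 1)
  · rw [show w hn j = w hn (i + 1) from (w_eq_iff hn).2 hadj.symm]
    exact (IsWord.delta hn i).mono hn (by omega)
  · set m := n - 1 with hmdef
    set j0 := (j + (m - 1)) % m with hj0def
    have hj0 : j0 < m := Nat.mod_lt _ (by omega)
    have hj01 : (j0 + 1) % m = j % m := by
      rw [hj0def, mod_mod_add, show j + (m - 1) + 1 = j + m from by omega,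
        Nat.add_mod_right]
    have hwj : w hn (j0 + 1) = w hn j := (w_eq_iff hn).2 hj01
    have hij0 : i % m ≠ j0 % m := by
      intro h
      exact hadj ((mod_add_cancel 1 h).trans hj01)
    have hij2 : i % m ≠ (j0 + 1) % m := by
      rw [hj01, him, hjm]; exact hij
    have hj0j : w hn j0 ≠ w hn j := by
      intro h
      rw [w_eq_iff hn] at h
      exact mod_succ_ne hm (hj01.trans h.symm)
    -- the conjugator
    have e1 : cyc (z0 hn) (w hn j0) (w hn j) (w hn i) = w hn i :=
      cyc_apply_of_ne (w_ne_z0 hn i) (fun h => hij0 ((w_eq_iff hn).1 h))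
        (w_ne hn hi hj hij)
    have e2 : cyc (z0 hn) (w hn j0) (w hn j) (w hn j0) = w hn j :=
      cyc_apply_mid (Ne.symm (w_ne_z0 hn j)) hj0j
    have e3 : cyc (z0 hn) (w hn j0) (w hn j) (w hn j) = z0 hn :=
      cyc_apply_right _ _ _
    have key : cyc (z0 hn) (w hn j0) (w hn j) * cyc (w hn i) (w hn j0) (w hn j) *
        (cyc (z0 hn) (w hn j0) (w hn j))⁻¹ = cyc (z0 hn) (w hn i) (w hn j) := by
      rw [cyc_conj, e1, e2, e3]
      exact (cyc_rot (Ne.symm (w_ne_z0 hn i)) (Ne.symm (w_ne_z0 hn j))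
        (w_ne hn hi hj hij)).symm
    rw [← key]
    have hD : IsWord hn (2 * j0 + 1) (cyc (z0 hn) (w hn j0) (w hn j)) := by
      rw [← hwj]; exact IsWord.delta hn j0
    have hg : IsWord hn (8 * n) (cyc (w hn i) (w hn j0) (w hn j)) := by
      rw [← hwj]
      exact cycB hn i j0 hi hj0 hij0 hij2
    exact (hD.conj hn hg).mono hn (by omega)

lemma cycAny (x y z : Fin n) (hxy : x ≠ y) (hxz : x ≠ z) (hyz : y ≠ z) :
    IsWord hn (30 * n) (cyc x y z) := by
  have hrec : ∀ u v : Fin n, u ≠ v → u ≠ z0 hn → v ≠ z0 hn →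
      IsWord hn (14 * n) (cyc (z0 hn) u v) := by
    intro u v huv hu hv
    have hu1 : 1 ≤ u.val := by
      rcases Nat.eq_zero_or_pos u.val with h | h
      · exact absurd (Fin.ext h) hu
      · exact h
    have hv1 : 1 ≤ v.val := by
      rcases Nat.eq_zero_or_pos v.val with h | h
      · exact absurd (Fin.ext h) hv
      · exact h
    have hu2 : u = w hn (u.val - 1) := by
      simp only [w, Fin.ext_iff]
      rw [Nat.mod_eq_of_lt (by omega)]
      omega
    have hv2 : v = w hn (v.val - 1) := by
      simp only [w, Fin.ext_iff]
      rw [Nat.mod_eq_of_lt (by omega)]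
      omega
    rw [hu2, hv2]
    refine cyc0 hn _ _ (by omega) (by omega) ?_
    intro h
    exact huv (by rw [hu2, hv2, h])
  by_cases hx0 : x = z0 hn
  · subst hx0
    exact (hrec y z hyz (Ne.symm hxy) (Ne.symm hxz)).mono hn (by omega)
  · by_cases hy0 : y = z0 hn
    · subst hy0
      rw [cyc_rot hxy hxz hyz]
      exact (hrec z x (Ne.symm hxz) (Ne.symm hyz) hx0).mono hn (by omega)
    · by_cases hz0 : z = z0 hn
      · subst hz0
        rw [cyc_rot hxy hxz hyz, cyc_rot hyz (Ne.symm hxy) (Ne.symm hxz)]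
        exact (hrec x y hxy hx0 hy0).mono hn (by omega)
      · rw [← cyc_chain (Ne.symm hx0) (Ne.symm hy0) (Ne.symm hz0) hxy hxz hyz]
        exact ((hrec x y hxy hx0 hy0).mul hn (hrec y z hyz hy0 hz0)).mono hn (by omega)

end Puzzle

namespace Puzzle
open Equiv Equiv.Perm

variable {n : ℕ} (hn : 3 ≤ n)

lemma sign_cyc {x y z : Fin n} (hxy : x ≠ y) (hyz : y ≠ z) :
    Equiv.Perm.sign (cyc x y z) = 1 := by
  rw [cyc, map_mul, Equiv.Perm.sign_swap hxy, Equiv.Perm.sign_swap hyz]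
  decide

lemma decomp : ∀ (k : ℕ) (π : Equiv.Perm (Fin n)), π.support.card ≤ k →
    Equiv.Perm.sign π = 1 →
    ∃ L : List (Equiv.Perm (Fin n)), L.length ≤ π.support.card ∧
      (∀ σ ∈ L, ∃ x y z : Fin n, x ≠ y ∧ x ≠ z ∧ y ≠ z ∧ σ = cyc x y z) ∧
      L.prod = π := by
  intro k
  induction k with
  | zero =>
      intro π hk _
      have h1 : π = 1 := by
        rw [← Equiv.Perm.support_eq_empty_iff, ← Finset.card_eq_zero]
        omega
      exact ⟨[], by simp, by simp, by simp [h1]⟩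
  | succ k ih =>
      intro π hk hsign
      by_cases h1 : π = 1
      · exact ⟨[], by simp, by simp, by simp [h1]⟩
      · have hne : π.support.Nonempty := by
          rwa [Finset.nonempty_iff_ne_empty, ne_eq, Equiv.Perm.support_eq_empty_iff]
        obtain ⟨a, ha⟩ := hne
        have hab : π a ≠ a := Equiv.Perm.mem_support.1 ha
        set b := π a with hbdef
        have hbsupp : b ∈ π.support := by
          rw [hbdef, Equiv.Perm.apply_mem_support]
          exact ha
        have hbamem : b ≠ a := hab
        -- choose third point c
        have hc : ∃ c : Fin n, c ≠ a ∧ c ≠ b ∧ c ∈ π.support := by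
          by_cases hba : π b = a
          · by_contra hno
            push_neg at hno
            have hsub : π.support ⊆ {a, b} := by
              intro x hx
              by_contra hxab
              simp only [Finset.mem_insert, Finset.mem_singleton] at hxab
              push_neg at hxab
              exact (hno x hxab.1 hxab.2) hx
            have hba' : ({a, b} : Finset (Fin n)) ⊆ π.support := by
              intro x hx
              rcases Finset.mem_insert.1 hx with h | h
              · subst h; exact ha
              · rw [Finset.mem_singleton.1 h]; exact hbsupp
            have h2 : π.support.card = 2 := by
              have hle := Finset.card_le_card hsub
              have hge := Finset.card_le_card hba'
              rw [Finset.card_insert_of_notMem (by simp [Ne.symm hbamem]),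
                Finset.card_singleton] at hle hge
              omega
            obtain ⟨x, y, hxy, hswap⟩ := Equiv.Perm.card_support_eq_two.1 h2
            rw [hswap, Equiv.Perm.sign_swap hxy] at hsign
            exact absurd hsign (by decide)
          · have hpbb : π b ≠ b := Equiv.Perm.mem_support.1 hbsupp
            refine ⟨π b, hba, hpbb, ?_⟩
            rw [Equiv.Perm.apply_mem_support]
            exact hbsupp
        obtain ⟨c, hca, hcb, hcsupp⟩ := hc
        have hab' : a ≠ b := Ne.symm hbamem
        have hbc : b ≠ c := Ne.symm hcb
        have hac : a ≠ c := Ne.symm hca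
        set σ := cyc a b c with hσdef
        set π' := σ⁻¹ * π with hπ'def
        have hπ'a : π' a = a := by
          have hσa : σ a = b := cyc_apply_left hab' hac
          rw [hπ'def, Equiv.Perm.mul_apply, ← hbdef, ← hσa, show σ⁻¹ (σ a) = a from Equiv.symm_apply_apply σ a]
        have hfix : ∀ x : Fin n, x ∉ π.support → π' x = x := by
          intro x hx
          have hxa : x ≠ a := fun h => hx (h ▸ ha)
          have hxb : x ≠ b := fun h => hx (h ▸ hbsupp)
          have hxc : x ≠ c := fun h => hx (h ▸ hcsupp)
          have hπx : π x = x := by rwa [Equiv.Perm.mem_support, not_not] at hx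
          have hσx : σ x = x := cyc_apply_of_ne hxa hxb hxc
          rw [hπ'def, Equiv.Perm.mul_apply, hπx, ← hσx, show σ⁻¹ (σ x) = x from Equiv.symm_apply_apply σ x]
          exact hσx.symm
        have hsub : π'.support ⊆ π.support.erase a := by
          intro x hx
          rw [Finset.mem_erase]
          constructor
          · intro h
            subst h
            exact (Equiv.Perm.mem_support.1 hx) hπ'a
          · by_contra h
            exact (Equiv.Perm.mem_support.1 hx) (hfix x h)
        have hcard : π'.support.card ≤ π.support.card - 1 := by
          have := Finset.card_le_card hsub
          rwa [Finset.card_erase_of_mem ha] at this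
        have hpos : 1 ≤ π.support.card := Finset.card_pos.2 ⟨a, ha⟩
        have hsign' : Equiv.Perm.sign π' = 1 := by
          rw [hπ'def, map_mul, map_inv, hσdef, sign_cyc hab' hbc, hsign]
          simp
        obtain ⟨L', hlen, hcycs, hprod⟩ := ih π' (by omega) hsign'
        refine ⟨σ :: L', ?_, ?_, ?_⟩
        · simp only [List.length_cons]
          omega
        · intro τ hτ
          rcases List.mem_cons.1 hτ with h | h
          · exact ⟨a, b, c, hab', hac, hbc, h⟩
          · exact hcycs τ h
        · rw [List.prod_cons, hprod, hπ'def, mul_inv_cancel_left]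

lemma words_of_list (L : List (Equiv.Perm (Fin n)))
    (h : ∀ σ ∈ L, IsWord hn (30 * n) σ) :
    IsWord hn (30 * n * L.length) L.prod := by
  induction L with
  | nil => simpa using IsWord.one hn
  | cons g t ih =>
      have := (h g (by simp)).mul hn (ih (fun σ hσ => h σ (by simp [hσ])))
      rw [List.prod_cons]
      refine this.mono hn ?_
      rw [List.length_cons, Nat.mul_succ]
      omega

lemma main_word (π : Equiv.Perm (Fin n)) (hsign : Equiv.Perm.sign π = 1) :
    IsWord hn (30 * n * n) π := by
  obtain ⟨L, hlen, hcycs, hprod⟩ := decomp π.support.card π le_rfl hsign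
  have hL : ∀ σ ∈ L, IsWord hn (30 * n) σ := by
    intro σ hσ
    obtain ⟨x, y, z, hxy, hxz, hyz, rfl⟩ := hcycs σ hσ
    exact cycAny hn x y z hxy hxz hyz
  have := words_of_list hn L hL
  rw [hprod] at this
  refine this.mono hn ?_
  have h1 : L.length ≤ n := by
    have h0 := Finset.card_le_univ π.support
    rw [Fintype.card_fin] at h0
    omega
  exact Nat.mul_le_mul_left _ h1

end Puzzle


/-- There is a constant `C` such that for every `n ≥ 3`, with
`α = (1 2 3)` and `β = (2 3 … n)` (the generators of the 2-connected `(3, n-1)`-puzzle,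
0-indexed as `(0 1 2)` and `(1 2 … n-1)` on `Fin n`), every even permutation of `Fin n` is
a product of at most `C * n ^ 2` elements of `{α, α⁻¹, β, β⁻¹}`. In particular, the subgroup
generated by `α` and `β` contains the alternating group. -/
theorem twoConnected_three_b_puzzle_generates_even :
    ∃ C : ℕ, ∀ n : ℕ, ∀ _hn : 3 ≤ n,
      (∀ π : Equiv.Perm (Fin n), Equiv.Perm.sign π = 1 →
        ∃ l : List (Equiv.Perm (Fin n)),
          l.length ≤ C * n ^ 2 ∧
          (∀ g ∈ l,
            g = List.formPerm [(⟨0, by omega⟩ : Fin n), ⟨1, by omega⟩, ⟨2, by omega⟩] ∨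
            g = (List.formPerm [(⟨0, by omega⟩ : Fin n), ⟨1, by omega⟩, ⟨2, by omega⟩])⁻¹ ∨
            g = List.formPerm ((List.finRange n).drop 1) ∨
            g = (List.formPerm ((List.finRange n).drop 1))⁻¹) ∧
          l.prod = π) ∧
      alternatingGroup (Fin n) ≤
        Subgroup.closure
          ({List.formPerm [(⟨0, by omega⟩ : Fin n), ⟨1, by omega⟩, ⟨2, by omega⟩],
            List.formPerm ((List.finRange n).drop 1)} : Set (Equiv.Perm (Fin n))) := by
  refine ⟨30, fun n hn => ⟨?_, ?_⟩⟩
  · intro π hπ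
    obtain ⟨l, hlen, hmem, hprod⟩ := Puzzle.main_word hn π hπ
    refine ⟨l, hlen.trans (le_of_eq (by ring)), ?_, hprod⟩
    intro g hg
    exact hmem g hg
  · intro π hπ
    rw [Equiv.Perm.mem_alternatingGroup] at hπ
    obtain ⟨l, hlen, hmem, hprod⟩ := Puzzle.main_word hn π hπ
    rw [← hprod]
    refine Subgroup.list_prod_mem _ ?_
    intro g hg
    rcases hmem g hg with h | h | h | h <;> subst h
    · exact Subgroup.subset_closure (Set.mem_insert _ _)
    · exact Subgroup.inv_mem _ (Subgroup.subset_closure (Set.mem_insert _ _))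
    · exact Subgroup.subset_closure (Set.mem_insert_of_mem _ rfl)
    · exact Subgroup.inv_mem _ (Subgroup.subset_closure (Set.mem_insert_of_mem _ rfl))
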